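/- Let p₁, p₂ ∈ ℤ[t] be monic of positive degree. In H = ℤ[t]/(p₁p₂) with h = multiplication by t, the ideal (p₂)/(p₁p₂) is the unique h-invariant primitive ℤ-sublattice of H on which the characteristic polynomial of h is p₁, and it is isomorphic as a ℤ[t]-module to ℤ[t]/(p₁). -/

import Mathlib

/-- `IsCharPolyOn c N p` says that the multiplication-by-`c` endomorphism of the ring `R`
maps the `ℤ`-sublattice `N` into itself and is represented on some `ℤ`-basis of `N` by an
integer matrix whose characteristic polynomial is `p`. -/
def IsCharPolyOn {R : Type} [CommRing R] (c : R) (N : Submodule ℤ R)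
    (p : Polynomial ℤ) : Prop :=
  ∃ (n : ℕ) (b : Module.Basis (Fin n) ℤ N) (A : Matrix (Fin n) (Fin n) ℤ),
    (∀ j, c * (b j : R) = ∑ i, A i j • ((b i : R))) ∧ A.charpoly = p

/-- The image of the ideal `(p₂)` in `ℤ[t]/(p₁p₂)`, viewed as a `ℤ`-sublattice. -/
noncomputable def Ksub (p₁ p₂ : Polynomial ℤ) :
    Submodule ℤ (Polynomial ℤ ⧸ Ideal.span {p₁ * p₂}) :=
  Submodule.restrictScalars ℤ
    ((Ideal.span {p₂}).map (Ideal.Quotient.mk (Ideal.span {p₁ * p₂})))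

namespace KsubAux
open Polynomial

variable (p₁ p₂ : Polynomial ℤ)

lemma mem_Ksub_iff (r : Polynomial ℤ) :
    Ideal.Quotient.mk (Ideal.span {p₁ * p₂}) r ∈ Ksub p₁ p₂ ↔ p₂ ∣ r := by
  constructor
  · intro h
    rw [Ksub, Submodule.restrictScalars_mem, Ideal.map_span, Set.image_singleton,
      Ideal.mem_span_singleton'] at h
    obtain ⟨a, ha⟩ := h
    obtain ⟨s, rfl⟩ := Ideal.Quotient.mk_surjective a
    rw [← map_mul, Ideal.Quotient.mk_eq_mk_iff_sub_mem, Ideal.mem_span_singleton] at ha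
    obtain ⟨t, ht⟩ := ha
    exact ⟨s - p₁ * t, by linear_combination -ht⟩
  · rintro ⟨s, rfl⟩
    rw [Ksub, Submodule.restrictScalars_mem, Ideal.map_span, Set.image_singleton,
      Ideal.mem_span_singleton']
    exact ⟨Ideal.Quotient.mk _ s, by rw [← map_mul, mul_comm s p₂]⟩

lemma smul_eq_mk_mul (I : Ideal (Polynomial ℤ)) (q : Polynomial ℤ)
    (z : Polynomial ℤ ⧸ I) : q • z = Ideal.Quotient.mk I q * z := by
  obtain ⟨r, rfl⟩ := Ideal.Quotient.mk_surjective z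
  rw [← map_mul, ← Ideal.Quotient.mk_eq_mk, ← Ideal.Quotient.mk_eq_mk, ← Submodule.Quotient.mk_smul,
    smul_eq_mul]

/-- The `ℤ[X]`-linear map `ℤ[X]/(p₁) → ℤ[X]/(p₁p₂)` given by multiplication by `p₂`. -/
noncomputable def gmap : (Polynomial ℤ ⧸ Ideal.span {p₁}) →ₗ[Polynomial ℤ]
    (Polynomial ℤ ⧸ Ideal.span {p₁ * p₂}) :=
  Submodule.liftQ _ (LinearMap.toSpanSingleton (Polynomial ℤ) _
      (Ideal.Quotient.mk (Ideal.span {p₁ * p₂}) p₂))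
    (by
      intro q hq
      rw [Ideal.mem_span_singleton] at hq
      obtain ⟨t, rfl⟩ := hq
      simp only [LinearMap.mem_ker, LinearMap.toSpanSingleton_apply]
      rw [smul_eq_mk_mul, ← map_mul, Ideal.Quotient.eq_zero_iff_mem, Ideal.mem_span_singleton]
      exact ⟨t, by ring⟩)

lemma gmap_mk (q : Polynomial ℤ) :
    gmap p₁ p₂ (Ideal.Quotient.mk (Ideal.span {p₁}) q)
      = Ideal.Quotient.mk (Ideal.span {p₁ * p₂}) (q * p₂) := by
  rw [gmap]
  erw [Submodule.liftQ_apply]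

lemma gmap_inj (hp1 : p₁ ≠ 0) (hp2 : p₂ ≠ 0) : Function.Injective (gmap p₁ p₂) := by
  rw [← LinearMap.ker_eq_bot]
  apply Submodule.ker_liftQ_eq_bot
  intro q hq
  simp only [LinearMap.mem_ker, LinearMap.toSpanSingleton_apply] at hq
  rw [smul_eq_mk_mul, ← map_mul, Ideal.Quotient.eq_zero_iff_mem, Ideal.mem_span_singleton] at hq
  rw [Ideal.mem_span_singleton]
  obtain ⟨t, ht⟩ := hq
  refine ⟨t, mul_right_cancel₀ hp2 ?_⟩
  rw [ht]; ring

lemma gmap_mem_Ksub (y : Polynomial ℤ ⧸ Ideal.span {p₁}) : gmap p₁ p₂ y ∈ Ksub p₁ p₂ := by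
  obtain ⟨q, rfl⟩ := Ideal.Quotient.mk_surjective y
  rw [gmap_mk, Ksub, Submodule.restrictScalars_mem, Ideal.map_span, Set.image_singleton,
    Ideal.mem_span_singleton']
  exact ⟨Ideal.Quotient.mk _ q, by rw [← map_mul]⟩

noncomputable def emap : (Polynomial ℤ ⧸ Ideal.span {p₁}) →ₗ[ℤ] Ksub p₁ p₂ :=
  LinearMap.codRestrict _ ((gmap p₁ p₂).restrictScalars ℤ) (gmap_mem_Ksub p₁ p₂)

lemma emap_surj : Function.Surjective (emap p₁ p₂) := by
  rintro ⟨x, hx⟩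
  rw [Ksub, Submodule.restrictScalars_mem, Ideal.map_span, Set.image_singleton,
    Ideal.mem_span_singleton'] at hx
  obtain ⟨a, ha⟩ := hx
  obtain ⟨s, rfl⟩ := Ideal.Quotient.mk_surjective a
  refine ⟨Ideal.Quotient.mk _ s, ?_⟩
  apply Subtype.ext
  show gmap p₁ p₂ _ = x
  rw [gmap_mk, ← ha, map_mul]

noncomputable def eequiv (hp1 : p₁ ≠ 0) (hp2 : p₂ ≠ 0) :
    (Polynomial ℤ ⧸ Ideal.span {p₁}) ≃ₗ[ℤ] Ksub p₁ p₂ :=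
  LinearEquiv.ofBijective (emap p₁ p₂)
    ⟨fun a b hab => gmap_inj p₁ p₂ hp1 hp2 (congrArg Subtype.val hab), emap_surj p₁ p₂⟩

lemma eequiv_coe (hp1 : p₁ ≠ 0) (hp2 : p₂ ≠ 0) (y) :
    ((eequiv p₁ p₂ hp1 hp2 y : Ksub p₁ p₂) : Polynomial ℤ ⧸ Ideal.span {p₁ * p₂})
      = gmap p₁ p₂ y := rfl

lemma eequiv_X_mul (hp1 : p₁ ≠ 0) (hp2 : p₂ ≠ 0) (y) :
    ((eequiv p₁ p₂ hp1 hp2 (Ideal.Quotient.mk (Ideal.span {p₁}) X * y)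
        : Ksub p₁ p₂) : Polynomial ℤ ⧸ Ideal.span {p₁ * p₂})
    = Ideal.Quotient.mk (Ideal.span {p₁ * p₂}) X
        * ((eequiv p₁ p₂ hp1 hp2 y : Ksub p₁ p₂) : Polynomial ℤ ⧸ Ideal.span {p₁ * p₂}) := by
  rw [eequiv_coe, eequiv_coe, ← smul_eq_mk_mul, ← smul_eq_mk_mul, map_smul]

lemma minpoly_root_eq (h₁ : p₁.Monic) : minpoly ℤ (AdjoinRoot.root p₁) = p₁ := by
  refine (minpoly.unique' ℤ _ h₁ ?_ ?_).symm
  · rw [AdjoinRoot.aeval_eq, AdjoinRoot.mk_self]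
  · intro q hq
    by_cases h0 : Polynomial.aeval (AdjoinRoot.root p₁) q = 0
    · left
      rw [AdjoinRoot.aeval_eq, AdjoinRoot.mk_eq_zero] at h0
      exact Polynomial.eq_zero_of_dvd_of_degree_lt h0 hq
    · right; exact h0

lemma charpoly_eq (h₁ : p₁.Monic) :
    (Algebra.leftMulMatrix (AdjoinRoot.powerBasis' h₁).basis
      (AdjoinRoot.powerBasis' h₁).gen).charpoly = p₁ := by
  rw [charpoly_leftMulMatrix]
  exact minpoly_root_eq p₁ h₁

lemma gen_mul_basis (h₁ : p₁.Monic) (j) :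
    (AdjoinRoot.powerBasis' h₁).gen * (AdjoinRoot.powerBasis' h₁).basis j
      = ∑ i, (Algebra.leftMulMatrix (AdjoinRoot.powerBasis' h₁).basis
          (AdjoinRoot.powerBasis' h₁).gen) i j • (AdjoinRoot.powerBasis' h₁).basis i := by
  conv_lhs => rw [← (AdjoinRoot.powerBasis' h₁).basis.sum_repr
    ((AdjoinRoot.powerBasis' h₁).gen * (AdjoinRoot.powerBasis' h₁).basis j)]
  refine Finset.sum_congr rfl fun i _ => ?_
  rw [Algebra.leftMulMatrix_eq_repr_mul]

section CH

variable {H : Type} [CommRing H]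

noncomputable def phi (c : H) (N : Submodule ℤ H) (hinv : ∀ x ∈ N, c * x ∈ N) :
    N →ₗ[ℤ] N :=
  (LinearMap.mulLeft ℤ c).restrict (p := N) (q := N) (fun x hx => hinv x hx)

lemma phi_coe (c : H) (N : Submodule ℤ H) (hinv) (y : N) :
    ((phi c N hinv y : N) : H) = c * (y : H) := rfl

lemma aeval_phi_coe (c : H) (N : Submodule ℤ H) (hinv) (q : Polynomial ℤ) (y : N) :
    ((Polynomial.aeval (phi c N hinv) q y : N) : H)
      = Polynomial.aeval c q * (y : H) := by
  induction q using Polynomial.induction_on generalizing y with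
  | C a => simp [zsmul_eq_mul]
  | add q r hq hr =>
      simp only [map_add, LinearMap.add_apply, Submodule.coe_add, hq, hr, add_mul]
  | monomial n a hq =>
      have : (C a * X ^ (n + 1)) = (C a * X ^ n) * X := by ring
      rw [this]
      calc ((Polynomial.aeval (phi c N hinv) (C a * X ^ n * X)) y : H)
          = ((Polynomial.aeval (phi c N hinv) (C a * X ^ n)) (phi c N hinv y) : H) := by
            rw [map_mul, Polynomial.aeval_X, Module.End.mul_apply]
        _ = Polynomial.aeval c (C a * X ^ n) * (c * (y : H)) := by rw [hq, phi_coe]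
        _ = Polynomial.aeval c (C a * X ^ n * X) * (y : H) := by
            conv_rhs => rw [map_mul, Polynomial.aeval_X]
            ring

lemma toMatrixAlgEquiv_phi (c : H) (N : Submodule ℤ H) (hinv) {n : ℕ}
    (b : Module.Basis (Fin n) ℤ N) (A : Matrix (Fin n) (Fin n) ℤ)
    (hA : ∀ j, c * (b j : H) = ∑ i, A i j • ((b i : H))) :
    LinearMap.toMatrixAlgEquiv b (phi c N hinv) = A := by
  ext i j
  rw [LinearMap.toMatrixAlgEquiv_apply]
  have hb : phi c N hinv (b j) = ∑ i, A i j • b i := by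
    apply Subtype.ext
    rw [phi_coe, hA j]
    push_cast
    rfl
  rw [hb, b.repr_sum_self]

lemma mul_eq_zero_of_charpoly (c : H) (N : Submodule ℤ H) (hinv : ∀ x ∈ N, c * x ∈ N)
    {n : ℕ} (b : Module.Basis (Fin n) ℤ N) (A : Matrix (Fin n) (Fin n) ℤ)
    (hA : ∀ j, c * (b j : H) = ∑ i, A i j • ((b i : H)))
    (p : Polynomial ℤ) (hcp : A.charpoly = p) :
    ∀ x ∈ N, Polynomial.aeval c p * x = 0 := by
  have hz : Polynomial.aeval (phi c N hinv) p = 0 := by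
    apply (LinearMap.toMatrixAlgEquiv b).injective
    have h2 := Polynomial.aeval_algHom_apply
      ((LinearMap.toMatrixAlgEquiv b).toAlgHom) (phi c N hinv) p
    erw [map_zero, ← h2, toMatrixAlgEquiv_phi c N hinv b A hA, ← hcp,
      Matrix.aeval_self_charpoly]
  intro x hx
  have := aeval_phi_coe c N hinv p ⟨x, hx⟩
  rw [hz] at this
  simpa using this.symm

end CH

end KsubAux

set_option maxHeartbeats 1000000
set_option synthInstance.maxHeartbeats 400000

open Polynomial KsubAux in
/-- Lemma 2.8 (a): in `H = ℤ[t]/(p₁p₂)` with `h` = multiplication by `t`, the sublattice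
`(p₂)/(p₁p₂)` is `h`-invariant and primitive, the characteristic polynomial of `h` on it
is `p₁`, it is isomorphic to `ℤ[t]/(p₁)` as a `ℤ[t]`-module, and it is the unique
`h`-invariant primitive sublattice of `H` on which the characteristic polynomial of `h`
is `p₁`. -/
theorem Ksub_unique_primitive_invariant (p₁ p₂ : Polynomial ℤ)
    (h₁ : p₁.Monic) (h₂ : p₂.Monic) (hd₁ : 0 < p₁.natDegree) (hd₂ : 0 < p₂.natDegree) :
    (∀ x ∈ Ksub p₁ p₂,
        Ideal.Quotient.mk (Ideal.span {p₁ * p₂}) Polynomial.X * x ∈ Ksub p₁ p₂) ∧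
    (∀ (x : (Polynomial ℤ ⧸ Ideal.span {p₁ * p₂}) ⧸ Ksub p₁ p₂) (c : ℤ),
        c ≠ 0 → c • x = 0 → x = 0) ∧
    IsCharPolyOn (Ideal.Quotient.mk (Ideal.span {p₁ * p₂}) Polynomial.X) (Ksub p₁ p₂) p₁ ∧
    (∃ e : (Polynomial ℤ ⧸ Ideal.span {p₁}) ≃ₗ[ℤ] Ksub p₁ p₂,
        ∀ y, ((e (Ideal.Quotient.mk (Ideal.span {p₁}) Polynomial.X * y) :
              Polynomial ℤ ⧸ Ideal.span {p₁ * p₂}))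
          = Ideal.Quotient.mk (Ideal.span {p₁ * p₂}) Polynomial.X * (e y :
              Polynomial ℤ ⧸ Ideal.span {p₁ * p₂})) ∧
    (∀ N : Submodule ℤ (Polynomial ℤ ⧸ Ideal.span {p₁ * p₂}),
        (∀ x ∈ N, Ideal.Quotient.mk (Ideal.span {p₁ * p₂}) Polynomial.X * x ∈ N) →
        (∀ (x : (Polynomial ℤ ⧸ Ideal.span {p₁ * p₂}) ⧸ N) (c : ℤ),
            c ≠ 0 → c • x = 0 → x = 0) →
        IsCharPolyOn (Ideal.Quotient.mk (Ideal.span {p₁ * p₂}) Polynomial.X) N p₁ →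
        N = Ksub p₁ p₂) := by
  have hp1 : p₁ ≠ 0 := h₁.ne_zero
  have hp2 : p₂ ≠ 0 := h₂.ne_zero
  refine ⟨?_, ?_, ?_, ?_, ?_⟩
  · -- invariance
    intro x hx
    exact Ideal.mul_mem_left _ _ hx
  · -- primitivity
    intro x c hc hcx
    obtain ⟨y, rfl⟩ := Submodule.Quotient.mk_surjective _ x
    obtain ⟨r, rfl⟩ := Ideal.Quotient.mk_surjective y
    rw [← Submodule.Quotient.mk_smul, Submodule.Quotient.mk_eq_zero] at hcx
    rw [Submodule.Quotient.mk_eq_zero]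
    have hmk : c • Ideal.Quotient.mk (Ideal.span {p₁ * p₂}) r
        = Ideal.Quotient.mk (Ideal.span {p₁ * p₂}) (C c * r) := by
      have hCr : (C c * r : Polynomial ℤ) = c • r := by
        rw [Polynomial.smul_eq_C_mul]
      rw [hCr, map_zsmul]
    rw [hmk, mem_Ksub_iff] at hcx
    rw [mem_Ksub_iff]
    -- from p₂ ∣ C c * r deduce p₂ ∣ r
    obtain ⟨s, hs⟩ := hcx
    have hdq := Polynomial.modByMonic_add_div r p₂
    have key : p₂ ∣ C c * (r %ₘ p₂) :=
      ⟨s - C c * (r /ₘ p₂), by linear_combination hs + C c * hdq⟩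
    have hr0 : r %ₘ p₂ = 0 := by
      rcases eq_or_ne (r %ₘ p₂) 0 with h | h
      · exact h
      · have hdeg : (C c * (r %ₘ p₂)).degree < p₂.degree := by
          rw [Polynomial.degree_C_mul (by exact_mod_cast hc)]
          exact Polynomial.degree_modByMonic_lt r h₂
        have := Polynomial.eq_zero_of_dvd_of_degree_lt key hdeg
        rcases mul_eq_zero.mp this with h' | h'
        · exact absurd h' (by simp [hc])
        · exact absurd h' h
    rw [← Polynomial.modByMonic_eq_zero_iff_dvd h₂]
    exact hr0
  · -- IsCharPolyOn
    refine ⟨(AdjoinRoot.powerBasis' h₁).dim,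
      (AdjoinRoot.powerBasis' h₁).basis.map (eequiv p₁ p₂ hp1 hp2),
      Algebra.leftMulMatrix (AdjoinRoot.powerBasis' h₁).basis (AdjoinRoot.powerBasis' h₁).gen,
      ?_, charpoly_eq p₁ h₁⟩
    intro j
    erw [Module.Basis.map_apply]
    refine ((eequiv_X_mul p₁ p₂ hp1 hp2 ((AdjoinRoot.powerBasis' h₁).basis j)).symm).trans ?_
    have hgb : Ideal.Quotient.mk (Ideal.span {p₁}) X
        * (show Polynomial ℤ ⧸ Ideal.span {p₁} from (AdjoinRoot.powerBasis' h₁).basis j)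
        = ∑ i, (Algebra.leftMulMatrix (AdjoinRoot.powerBasis' h₁).basis
            (AdjoinRoot.powerBasis' h₁).gen) i j • (AdjoinRoot.powerBasis' h₁).basis i :=
      gen_mul_basis p₁ h₁ j
    erw [hgb, map_sum, Submodule.coe_sum]
    refine Finset.sum_congr rfl fun i _ => ?_
    erw [(eequiv p₁ p₂ hp1 hp2).map_smul]
    rfl
  · -- isomorphism
    exact ⟨eequiv p₁ p₂ hp1 hp2, fun y => eequiv_X_mul p₁ p₂ hp1 hp2 y⟩
  · -- uniqueness
    rintro N hinv hTF ⟨n, b, A, hA, hcp⟩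
    have haev : Polynomial.aeval
        (Ideal.Quotient.mk (Ideal.span {p₁ * p₂}) X) p₁
        = Ideal.Quotient.mk (Ideal.span {p₁ * p₂}) p₁ := AdjoinRoot.aeval_eq p₁
    have hmul0 : ∀ x ∈ N, Ideal.Quotient.mk (Ideal.span {p₁ * p₂}) p₁ * x = 0 := by
      intro x hx
      have := mul_eq_zero_of_charpoly _ N hinv b A hA p₁ hcp x hx
      erw [haev] at this; exact this
    have hNK : N ≤ Ksub p₁ p₂ := by
      intro x hx
      obtain ⟨r, rfl⟩ := Ideal.Quotient.mk_surjective x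
      have h0 := hmul0 _ hx
      rw [← map_mul, Ideal.Quotient.eq_zero_iff_mem, Ideal.mem_span_singleton] at h0
      rw [mem_Ksub_iff]
      obtain ⟨t, ht⟩ := h0
      exact ⟨t, mul_left_cancel₀ hp1 (by rw [ht]; ring)⟩
    have hn : n = p₁.natDegree := by
      have := Matrix.charpoly_natDegree_eq_dim A
      rw [hcp, Fintype.card_fin] at this
      omega
    refine le_antisymm hNK ?_
    intro x hxK
    by_contra hxN
    have hcon : ∀ c : ℤ, c ≠ 0 → c • x ∉ N := by
      intro c hc hcN
      apply hxN
      have h0 : c • (Submodule.Quotient.mk x : _ ⧸ N) = 0 := by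
        rw [← Submodule.Quotient.mk_smul, Submodule.Quotient.mk_eq_zero]
        exact hcN
      have := hTF _ c hc h0
      rwa [Submodule.Quotient.mk_eq_zero] at this
    -- build a linearly independent family of size n+1 in Ksub
    set v : Fin (n + 1) → (Polynomial ℤ ⧸ Ideal.span {p₁ * p₂}) :=
      Fin.snoc (fun i => (b i : Polynomial ℤ ⧸ Ideal.span {p₁ * p₂})) x with hv
    have hli : LinearIndependent ℤ v := by
      rw [Fintype.linearIndependent_iff]
      intro g hg
      rw [Fin.sum_univ_castSucc] at hg
      simp only [hv, Fin.snoc_castSucc, Fin.snoc_last] at hg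
      have hglast : g (Fin.last n) = 0 := by
        by_contra hgl
        refine hcon _ hgl ?_
        have hx0 : g (Fin.last n) • x
            = -∑ i : Fin n, g i.castSucc • (b i : Polynomial ℤ ⧸ Ideal.span {p₁ * p₂}) :=
          eq_neg_of_add_eq_zero_right (by rw [add_comm] at hg; rwa [add_comm])
        rw [hx0]
        exact N.neg_mem (N.sum_mem fun i _ => N.smul_mem _ (b i).2)
      rw [hglast, zero_smul, add_zero] at hg
      have hbli := b.linearIndependent
      rw [Fintype.linearIndependent_iff] at hbli
      have hz := hbli (fun i => g i.castSucc) (by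
        apply Subtype.ext
        push_cast
        exact hg)
      intro i
      refine Fin.lastCases ?_ ?_ i
      · exact hglast
      · exact hz
    have hvK : ∀ i, v i ∈ Ksub p₁ p₂ := by
      intro i
      refine Fin.lastCases ?_ ?_ i
      · simp only [hv, Fin.snoc_last]
        exact hxK
      · intro j
        simp only [hv, Fin.snoc_castSucc]
        exact hNK (b j).2
    set w : Fin (n + 1) → Ksub p₁ p₂ := fun i => ⟨v i, hvK i⟩ with hw
    have hliw : LinearIndependent ℤ w :=
      LinearIndependent.of_comp (Ksub p₁ p₂).subtype hli
    have hcard := ((AdjoinRoot.powerBasis' h₁).basis.map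
      (eequiv p₁ p₂ hp1 hp2)).card_le_card_of_linearIndependent hliw
    rw [Fintype.card_fin, Fintype.card_fin, AdjoinRoot.powerBasis'_dim] at hcard
    omega
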